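/- Iterated Gaussian identity: for an a-tuple of vectors v_1,…,v_a ∈ ℂ^c forming the c×a matrix V, and σ = h + iε·1_c with h Hermitian, ε > 0, one has ∫_{ℂ^{ca}} exp(i tr(V V† σ)) d[V] = π^{ca} det(−iσ)^{−a}, where d[V] is Lebesgue measure on the real and imaginary parts of all entries of V. -/

import Mathlib

open Matrix

open MeasureTheory Complex
open scoped ENNReal


lemma integral_cexp_quad_complex {b : ℂ} (hb : b.re < 0) :
    ∫ z : ℂ, Complex.exp (b * (z * (starRingEnd ℂ) z)) = ↑Real.pi / (-b) := by
  have hbne : b ≠ 0 := fun h => by simp [h] at hb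
  have hne : (↑Real.pi / (-b) : ℂ) ≠ 0 :=
    div_ne_zero (by exact_mod_cast Real.pi_ne_zero) (neg_ne_zero.mpr hbne)
  have h0 : ∫ z : ℂ, Complex.exp (b * (z * (starRingEnd ℂ) z))
      = ∫ p : ℝ × ℝ, Complex.exp (b * (p.1 : ℂ) ^ 2) * Complex.exp (b * (p.2 : ℂ) ^ 2) := by
    rw [← MeasurePreserving.integral_comp
      (MeasurePreserving.symm Complex.measurableEquivRealProd
        Complex.volume_preserving_equiv_real_prod)
      Complex.measurableEquivRealProd.symm.measurableEmbedding
      (fun z : ℂ => Complex.exp (b * (z * (starRingEnd ℂ) z)))]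
    congr 1; funext p
    rw [Complex.measurableEquivRealProd_symm_apply, ← Complex.exp_add]
    congr 1
    rw [Complex.mul_conj]
    have : Complex.normSq ⟨p.1, p.2⟩ = p.1 * p.1 + p.2 * p.2 := Complex.normSq_mk p.1 p.2
    rw [this]
    push_cast
    ring
  rw [h0]
  have h1 : ∫ x : ℝ, Complex.exp (b * (x : ℂ) ^ 2) = (↑Real.pi / (-b)) ^ (1 / 2 : ℂ) := by
    have := integral_gaussian_complex (b := -b) (by simpa using hb)
    simpa using this
  rw [show (volume : Measure (ℝ × ℝ)) = (volume : Measure ℝ).prod volume from rfl]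
  rw [integral_prod_mul (f := fun x : ℝ => Complex.exp (b * (x:ℂ)^2)) (g := fun x : ℝ => Complex.exp (b * (x:ℂ)^2)), h1, ← Complex.cpow_add _ _ hne]
  norm_num


noncomputable def leftMulLinear {n m : ℕ} (U : Matrix (Fin n) (Fin n) ℂ) :
    (Fin n → Fin m → ℂ) →ₗ[ℂ] (Fin n → Fin m → ℂ) where
  toFun V := U * Matrix.of V
  map_add' V W := by
    show U * (Matrix.of V + Matrix.of W) = U * Matrix.of V + U * Matrix.of W
    rw [Matrix.mul_add]
  map_smul' t V := by
    show U * (t • Matrix.of V) = t • (U * Matrix.of V)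
    rw [Matrix.mul_smul]

@[simp] lemma leftMulLinear_apply {n m : ℕ} (U : Matrix (Fin n) (Fin n) ℂ)
    (V : Fin n → Fin m → ℂ) (j : Fin n) (l : Fin m) :
    leftMulLinear U V j l = ∑ k, U j k * V k l := by
  show (U * Matrix.of V) j l = _
  simp [Matrix.mul_apply]

noncomputable def leftMulEquiv {n m : ℕ} (U : Matrix.unitaryGroup (Fin n) ℂ) :
    (Fin n → Fin m → ℂ) ≃ₗ[ℂ] (Fin n → Fin m → ℂ) :=
  LinearEquiv.ofLinear (leftMulLinear (U : Matrix (Fin n) (Fin n) ℂ))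
    (leftMulLinear (star (U : Matrix (Fin n) (Fin n) ℂ)))
    (LinearMap.ext fun V => show
        (U : Matrix (Fin n) (Fin n) ℂ) * ((star (U : Matrix (Fin n) (Fin n) ℂ)) * Matrix.of V)
          = Matrix.of V by
      rw [← Matrix.mul_assoc, Matrix.mem_unitaryGroup_iff.mp U.2, Matrix.one_mul])
    (LinearMap.ext fun V => show
        (star (U : Matrix (Fin n) (Fin n) ℂ)) * ((U : Matrix (Fin n) (Fin n) ℂ) * Matrix.of V)
          = Matrix.of V by
      rw [← Matrix.mul_assoc, Matrix.mem_unitaryGroup_iff'.mp U.2, Matrix.one_mul])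

@[simp] lemma leftMulEquiv_apply {n m : ℕ} (U : Matrix.unitaryGroup (Fin n) ℂ)
    (V : Fin n → Fin m → ℂ) (j : Fin n) (l : Fin m) :
    leftMulEquiv U V j l = ∑ k, (U : Matrix (Fin n) (Fin n) ℂ) j k * V k l := by
  rw [leftMulEquiv, LinearEquiv.ofLinear_apply, leftMulLinear_apply]

lemma sum_normSq_mulVec {n : ℕ} (U : Matrix.unitaryGroup (Fin n) ℂ) (v : Fin n → ℂ) :
    ∑ j, Complex.normSq (((U : Matrix (Fin n) (Fin n) ℂ) *ᵥ v) j)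
      = ∑ j, Complex.normSq (v j) := by
  have key : ∀ w : Fin n → ℂ,
      ((∑ j, Complex.normSq (w j) : ℝ) : ℂ) = dotProduct (star w) w := by
    intro w
    push_cast
    refine Finset.sum_congr rfl fun j _ => ?_
    rw [Pi.star_apply, Complex.star_def, Complex.normSq_eq_conj_mul_self]
  have h2 : dotProduct (star ((U : Matrix (Fin n) (Fin n) ℂ) *ᵥ v))
      ((U : Matrix (Fin n) (Fin n) ℂ) *ᵥ v) = dotProduct (star v) v := by
    rw [Matrix.star_mulVec, Matrix.dotProduct_mulVec, Matrix.vecMul_vecMul,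
      ← Matrix.star_eq_conjTranspose, Matrix.mem_unitaryGroup_iff'.mp U.2, Matrix.vecMul_one]
  have := (key _).trans (h2.trans (key v).symm)
  exact_mod_cast this

lemma measurePreserving_leftMulEquiv {n m : ℕ} (U : Matrix.unitaryGroup (Fin n) ℂ) :
    MeasurePreserving (leftMulEquiv (m := m) U) volume volume := by
  haveI h1 : (volume : Measure (Fin m → ℂ)).IsOpenPosMeasure := inferInstance
  haveI h2 : (volume : Measure (Fin n → Fin m → ℂ)).IsOpenPosMeasure := inferInstance
  haveI h3 : (volume : Measure (Fin n → Fin m → ℂ)).IsAddHaarMeasure := ⟨⟩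
  have hcont : Continuous (leftMulEquiv (m := m) U) :=
    LinearMap.continuous_of_finiteDimensional (leftMulEquiv (m := m) U).toLinearMap
  set N : (Fin n → Fin m → ℂ) → ℝ := fun V => ∑ j, ∑ l, Complex.normSq (V j l) with hN
  set B : Set (Fin n → Fin m → ℂ) := N ⁻¹' Set.Iio 1 with hB
  have hNe : ∀ V, N (leftMulEquiv U V) = N V := by
    intro V
    rw [hN]
    simp only
    rw [Finset.sum_comm]
    conv_rhs => rw [Finset.sum_comm]
    refine Finset.sum_congr rfl fun l _ => ?_
    have : ∀ j, (leftMulEquiv U V) j l = ((U : Matrix (Fin n) (Fin n) ℂ) *ᵥ fun k => V k l) j := by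
      intro j
      rw [leftMulEquiv_apply]
      rfl
    simp_rw [this]
    exact sum_normSq_mulVec U (fun k => V k l)
  have hNcont : Continuous N := by
    refine continuous_finset_sum _ fun j _ => continuous_finset_sum _ fun l _ => ?_
    exact Complex.continuous_normSq.comp ((continuous_apply l).comp (continuous_apply j))
  have hBo : IsOpen B := isOpen_Iio.preimage hNcont
  have h0B : (0 : Fin n → Fin m → ℂ) ∈ B := by
    simp [hB, hN, Set.mem_preimage]
  have hpos : 0 < volume B := hBo.measure_pos volume ⟨0, h0B⟩
  have hfin : volume B < ⊤ := by
    have hsub : B ⊆ Metric.closedBall 0 1 := by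
      intro V hV
      rw [Metric.mem_closedBall, dist_zero_right]
      refine (pi_norm_le_iff_of_nonneg zero_le_one).mpr fun j =>
        (pi_norm_le_iff_of_nonneg zero_le_one).mpr fun l => ?_
      have h1' : Complex.normSq (V j l) ≤ N V := by
        rw [hN]
        refine le_trans ?_ (Finset.single_le_sum
          (f := fun j => ∑ l, Complex.normSq (V j l))
          (fun i _ => Finset.sum_nonneg fun _ _ => Complex.normSq_nonneg _)
          (Finset.mem_univ j))
        exact Finset.single_le_sum (fun i _ => Complex.normSq_nonneg _) (Finset.mem_univ l)
      have h2' : Complex.normSq (V j l) ≤ 1 := le_of_lt (lt_of_le_of_lt h1' hV)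
      have h3' : ‖V j l‖ ^ 2 ≤ 1 := by
        rw [Complex.sq_norm]
        exact h2'
      nlinarith [norm_nonneg (V j l)]
    exact lt_of_le_of_lt (measure_mono hsub)
      (IsCompact.measure_lt_top (isCompact_closedBall 0 1))
  haveI h5 : (Measure.map (⇑(leftMulEquiv (m := m) U)) volume).IsAddHaarMeasure := by
    have hco : (⇑(leftMulEquiv (m := m) U))
        = ⇑((leftMulEquiv (m := m) U).toContinuousLinearEquiv) := rfl
    rw [hco]; infer_instance
  have hmain := Measure.isAddLeftInvariant_eq_smul
    (volume.map (leftMulEquiv (m := m) U)) (volume : Measure (Fin n → Fin m → ℂ))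
  have hmapB : (volume.map (leftMulEquiv (m := m) U)) B = volume B := by
    rw [Measure.map_apply hcont.measurable hBo.measurableSet]
    congr 1
    ext V
    simp only [Set.mem_preimage, hB, Set.mem_Iio]
    rw [hNe]
  rw [hmain] at hmapB
  rw [Measure.smul_apply, ENNReal.smul_def] at hmapB
  have hc : ((volume.map (leftMulEquiv (m := m) U)).addHaarScalarFactor
      (volume : Measure (Fin n → Fin m → ℂ)) : ℝ≥0∞) = 1 := by
    have h4 : ((volume.map (leftMulEquiv (m := m) U)).addHaarScalarFactor
        (volume : Measure (Fin n → Fin m → ℂ)) : ℝ≥0∞) * volume B = 1 * volume B := by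
      rw [one_mul]; exact_mod_cast hmapB
    exact (ENNReal.mul_left_inj hpos.ne' hfin.ne).mp h4
  have hc1 : (volume.map (leftMulEquiv (m := m) U)).addHaarScalarFactor
      (volume : Measure (Fin n → Fin m → ℂ)) = 1 := by
    exact_mod_cast hc
  refine ⟨hcont.measurable, ?_⟩
  rw [hmain, hc1, one_smul]

theorem gaussian_matrix_integral (c a : ℕ) (h : Matrix (Fin c) (Fin c) ℂ)
    (hh : h.IsHermitian) (ε : ℝ) (hε : 0 < ε)
    (σ : Matrix (Fin c) (Fin c) ℂ) (hσ : σ = h + (Complex.I * (ε : ℂ)) • 1) :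
    ∫ V : Fin c → Fin a → ℂ,
        Complex.exp (Complex.I * Matrix.trace (Matrix.of V * (Matrix.of V)ᴴ * σ)) =
      ((Real.pi : ℂ)) ^ (c * a) * ((Matrix.det ((-Complex.I) • σ))⁻¹) ^ a := by
  classical
  set Uu : Matrix.unitaryGroup (Fin c) ℂ := hh.eigenvectorUnitary with hUu
  set d : Fin c → ℂ := fun k => ((hh.eigenvalues k : ℝ) : ℂ) + Complex.I * (ε : ℂ) with hd
  have hU1 : (Uu : Matrix (Fin c) (Fin c) ℂ) * star (Uu : Matrix (Fin c) (Fin c) ℂ) = 1 :=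
    Matrix.mem_unitaryGroup_iff.mp Uu.2
  have hU1' : star (Uu : Matrix (Fin c) (Fin c) ℂ) * (Uu : Matrix (Fin c) (Fin c) ℂ) = 1 :=
    Matrix.mem_unitaryGroup_iff'.mp Uu.2
  have hdiag : star (Uu : Matrix (Fin c) (Fin c) ℂ) * σ * (Uu : Matrix (Fin c) (Fin c) ℂ)
      = Matrix.diagonal d := by
    rw [hσ, Matrix.mul_add, Matrix.add_mul]
    rw [show star (Uu : Matrix (Fin c) (Fin c) ℂ) * h * (Uu : Matrix (Fin c) (Fin c) ℂ)
        = Matrix.diagonal (RCLike.ofReal ∘ hh.eigenvalues) from by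
      have := hh.conjStarAlgAut_star_eigenvectorUnitary
      rw [Unitary.conjStarAlgAut_apply] at this
      simpa [hUu] using this]
    have h2 : star (Uu : Matrix (Fin c) (Fin c) ℂ) * ((Complex.I * (ε : ℂ)) • 1)
        * (Uu : Matrix (Fin c) (Fin c) ℂ) = (Complex.I * (ε : ℂ)) • (1 : Matrix (Fin c) (Fin c) ℂ) := by
      rw [Matrix.mul_smul, Matrix.mul_one, Matrix.smul_mul, hU1']
    rw [h2]
    ext i j
    by_cases hij : i = j
    · subst hij
      simp [Matrix.diagonal_apply_eq, Matrix.one_apply_eq, hd]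
    · simp [Matrix.diagonal_apply_ne _ hij, Matrix.one_apply_ne hij]
  have hσeq : σ = (Uu : Matrix (Fin c) (Fin c) ℂ) * Matrix.diagonal d
      * star (Uu : Matrix (Fin c) (Fin c) ℂ) := by
    rw [← hdiag]
    calc σ = ((Uu : Matrix (Fin c) (Fin c) ℂ) * star (Uu : Matrix (Fin c) (Fin c) ℂ)) * σ
        * ((Uu : Matrix (Fin c) (Fin c) ℂ) * star (Uu : Matrix (Fin c) (Fin c) ℂ)) := by
          rw [hU1, Matrix.one_mul, Matrix.mul_one]
      _ = _ := by simp only [Matrix.mul_assoc]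
  have hdet : Matrix.det ((-Complex.I) • σ) = ∏ k, ((-Complex.I) * d k) := by
    have hsm : (-Complex.I) • σ = (Uu : Matrix (Fin c) (Fin c) ℂ)
        * ((-Complex.I) • Matrix.diagonal d) * star (Uu : Matrix (Fin c) (Fin c) ℂ) := by
      rw [hσeq, Matrix.mul_smul, Matrix.smul_mul]
    rw [hsm, Matrix.det_mul, Matrix.det_mul]
    have : Matrix.det ((Uu : Matrix (Fin c) (Fin c) ℂ))
        * Matrix.det (star (Uu : Matrix (Fin c) (Fin c) ℂ)) = 1 := by
      rw [← Matrix.det_mul, hU1, Matrix.det_one]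
    calc Matrix.det (Uu : Matrix (Fin c) (Fin c) ℂ)
          * Matrix.det ((-Complex.I) • Matrix.diagonal d)
          * Matrix.det (star (Uu : Matrix (Fin c) (Fin c) ℂ))
        = Matrix.det ((-Complex.I) • Matrix.diagonal d)
          * (Matrix.det (Uu : Matrix (Fin c) (Fin c) ℂ)
            * Matrix.det (star (Uu : Matrix (Fin c) (Fin c) ℂ))) := by ring
      _ = Matrix.det ((-Complex.I) • Matrix.diagonal d) := by rw [this, mul_one]
      _ = ∏ k, ((-Complex.I) * d k) := by
          rw [← Matrix.diagonal_smul, Matrix.det_diagonal]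
          simp [smul_eq_mul]
  -- change of variables
  have hemb : MeasurableEmbedding (⇑(leftMulEquiv (m := a) Uu)) :=
    (LinearEquiv.toContinuousLinearEquiv
      (leftMulEquiv (m := a) Uu)).toHomeomorph.measurableEmbedding
  have hcov := (measurePreserving_leftMulEquiv (m := a) Uu).integral_comp hemb
    (fun V : Fin c → Fin a → ℂ =>
      Complex.exp (Complex.I * Matrix.trace (Matrix.of V * (Matrix.of V)ᴴ * σ)))
  rw [← hcov]
  -- pointwise diagonalization
  have hpoint : ∀ V : Fin c → Fin a → ℂ,
      Complex.I * Matrix.trace (Matrix.of (⇑(leftMulEquiv (m := a) Uu) V)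
        * (Matrix.of (⇑(leftMulEquiv (m := a) Uu) V))ᴴ * σ)
      = ∑ k, ∑ l, (Complex.I * d k) * (V k l * (starRingEnd ℂ) (V k l)) := by
    intro V
    have hofe : Matrix.of (⇑(leftMulEquiv (m := a) Uu) V)
        = (Uu : Matrix (Fin c) (Fin c) ℂ) * Matrix.of V := rfl
    rw [hofe, Matrix.conjTranspose_mul]
    have hrearr : ((Uu : Matrix (Fin c) (Fin c) ℂ) * Matrix.of V)
        * ((Matrix.of V)ᴴ * ((Uu : Matrix (Fin c) (Fin c) ℂ))ᴴ) * σ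
        = (Uu : Matrix (Fin c) (Fin c) ℂ)
          * (Matrix.of V * (Matrix.of V)ᴴ * (((Uu : Matrix (Fin c) (Fin c) ℂ))ᴴ * σ)) := by
      simp only [Matrix.mul_assoc]
    rw [hrearr, Matrix.trace_mul_comm]
    have hrearr2 : Matrix.of V * (Matrix.of V)ᴴ * (((Uu : Matrix (Fin c) (Fin c) ℂ))ᴴ * σ)
        * (Uu : Matrix (Fin c) (Fin c) ℂ)
        = Matrix.of V * (Matrix.of V)ᴴ
          * (star (Uu : Matrix (Fin c) (Fin c) ℂ) * σ * (Uu : Matrix (Fin c) (Fin c) ℂ)) := by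
      rw [Matrix.star_eq_conjTranspose]
      simp only [Matrix.mul_assoc]
    rw [hrearr2, hdiag]
    rw [Matrix.trace]
    simp only [Matrix.diag_apply, Matrix.mul_diagonal]
    rw [Finset.mul_sum]
    refine Finset.sum_congr rfl fun k _ => ?_
    have : (Matrix.of V * (Matrix.of V)ᴴ) k k
        = ∑ l, V k l * (starRingEnd ℂ) (V k l) := by
      rw [Matrix.mul_apply]
      refine Finset.sum_congr rfl fun l _ => ?_
      rw [Matrix.conjTranspose_apply]
      rfl
    rw [this, Finset.sum_mul, Finset.mul_sum]
    refine Finset.sum_congr rfl fun l _ => ?_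
    ring
  simp only [hpoint]
  -- factor the integral
  have hexp : ∀ V : Fin c → Fin a → ℂ,
      Complex.exp (∑ k, ∑ l, (Complex.I * d k) * (V k l * (starRingEnd ℂ) (V k l)))
      = ∏ k, ∏ l, Complex.exp ((Complex.I * d k) * (V k l * (starRingEnd ℂ) (V k l))) := by
    intro V
    rw [Complex.exp_sum]
    exact Finset.prod_congr rfl fun k _ => Complex.exp_sum _ _
  simp only [hexp]
  have hfact := MeasureTheory.integral_fintype_prod_eq_prod (ι := Fin c)
    (E := fun _ : Fin c => Fin a → ℂ) (μ := fun _ => volume)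
    (f := fun k (r : Fin a → ℂ) =>
      ∏ l, Complex.exp ((Complex.I * d k) * (r l * (starRingEnd ℂ) (r l))))
  rw [← MeasureTheory.volume_pi] at hfact
  rw [hfact]
  have hone : ∀ k, (∫ r : Fin a → ℂ,
      ∏ l, Complex.exp ((Complex.I * d k) * (r l * (starRingEnd ℂ) (r l))))
      = ((Real.pi : ℂ) / (-(Complex.I * d k))) ^ a := by
    intro k
    have hbre : (Complex.I * d k).re < 0 := by
      simp [hd, Complex.mul_re, Complex.add_im]
      exact hε
    rw [MeasureTheory.volume_pi]
    rw [MeasureTheory.integral_fintype_prod_eq_pow (ι := Fin a) (μ := volume)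
      (f := fun z : ℂ => Complex.exp ((Complex.I * d k) * (z * (starRingEnd ℂ) z)))]
    rw [integral_cexp_quad_complex hbre, Fintype.card_fin]
  simp only [hone]
  -- final algebra
  rw [Finset.prod_pow]
  rw [Finset.prod_div_distrib, Finset.prod_const, Finset.card_univ, Fintype.card_fin]
  have hprodneg : (∏ _k : Fin c, -(Complex.I * d _k)) = Matrix.det ((-Complex.I) • σ) := by
    rw [hdet]
    exact Finset.prod_congr rfl fun k _ => by ring
  rw [hprodneg, div_pow, ← pow_mul, inv_pow, div_eq_mul_inv]
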